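/- Let H be a finite-dimensional real inner product space, L, L̃ : H → H self-adjoint positive definite, and ℬ : H → S a surjective linear map onto a finite-dimensional space S with adjoint ℬᵀ : S → H. Then for every nonzero functional u ∈ S, the generalized Rayleigh quotient ⟨ℬ L̃⁻¹ ℬᵀ u, u⟩ / ⟨ℬ L⁻¹ ℬᵀ u, u⟩ lies between the smallest and largest eigenvalues of L̃⁻¹L. Consequently cond((ℬ L̃⁻¹ ℬᵀ)(ℬ L⁻¹ ℬᵀ)⁻¹) ≤ cond(L̃⁻¹ L), where cond denotes the ratio of the largest to smallest (real, positive) eigenvalue. -/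

import Mathlib

open LinearMap in
/-- Rayleigh-quotient bounds for an operator symmetric w.r.t. an abstract
inner-product core, given bounds on its eigenvalues. -/
theorem aux_rayleigh_core {E : Type*} [AddCommGroup E] [Module ℝ E]
    (c : InnerProductSpace.Core ℝ E) (hfd : FiniteDimensional ℝ E)
    (T : E →ₗ[ℝ] E) (hT : ∀ x y, c.inner (T x) y = c.inner x (T y))
    (a b : ℝ)
    (hab : ∀ lam : ℝ, Module.End.HasEigenvalue (T : Module.End ℝ E) lam →
      a ≤ lam ∧ lam ≤ b) :
    ∀ x : E, a * c.inner x x ≤ c.inner (T x) x ∧ c.inner (T x) x ≤ b * c.inner x x := by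
  letI : NormedAddCommGroup E := c.toNormedAddCommGroup
  letI : InnerProductSpace ℝ E := InnerProductSpace.ofCore c.toCore
  have hT' : T.IsSymmetric := fun x y => hT x y
  have hn : Module.finrank ℝ E = Module.finrank ℝ E := rfl
  set e := hT'.eigenvectorBasis hn with he
  set μ := hT'.eigenvalues hn with hμ
  have hTe : ∀ i, T (e i) = μ i • e i := fun i =>
    (hT'.hasEigenvector_eigenvectorBasis hn i).apply_eq_smul
  intro x
  have hrepr : ∀ i, e.repr x i = inner ℝ (e i) x := fun i => e.repr_apply_apply x i
  have hxx : c.inner x x = ∑ i, (e.repr x i) ^ 2 := by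
    change (inner ℝ x x : ℝ) = _
    nth_rewrite 1 [← e.sum_repr x]
    rw [sum_inner]
    refine Finset.sum_congr rfl fun i _ => ?_
    rw [real_inner_smul_left, ← hrepr i, sq]
  have hTxx : c.inner (T x) x = ∑ i, μ i * (e.repr x i) ^ 2 := by
    change (inner ℝ (T x) x : ℝ) = _
    nth_rewrite 1 [← e.sum_repr x]
    rw [map_sum, sum_inner]
    refine Finset.sum_congr rfl fun i _ => ?_
    rw [map_smul, hTe i, smul_smul, real_inner_smul_left, ← hrepr i]
    ring
  have hbounds : ∀ i : Fin (Module.finrank ℝ E), a ≤ μ i ∧ μ i ≤ b := fun i =>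
    hab (μ i) (hT'.hasEigenvalue_eigenvalues hn i)
  constructor
  · rw [hxx, hTxx, Finset.mul_sum]
    exact Finset.sum_le_sum fun i _ =>
      mul_le_mul_of_nonneg_right (hbounds i).1 (sq_nonneg _)
  · rw [hxx, hTxx, Finset.mul_sum]
    exact Finset.sum_le_sum fun i _ =>
      mul_le_mul_of_nonneg_right (hbounds i).2 (sq_nonneg _)

/-- For `L, L̃` self-adjoint positive definite on `H` and `ℬ : H → S`
surjective, the generalized Rayleigh quotient
`⟨ℬ L̃⁻¹ ℬᵀ u, u⟩ / ⟨ℬ L⁻¹ ℬᵀ u, u⟩` (for `u ≠ 0`) lies between the extreme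
eigenvalues of `L̃⁻¹L`; consequently every eigenvalue of
`(ℬ L̃⁻¹ ℬᵀ)(ℬ L⁻¹ ℬᵀ)⁻¹` lies between these bounds, which yields
`cond((ℬ L̃⁻¹ ℬᵀ)(ℬ L⁻¹ ℬᵀ)⁻¹) ≤ cond(L̃⁻¹ L)`. -/
theorem stmt12
    {H S : Type*} [NormedAddCommGroup H] [InnerProductSpace ℝ H]
    [FiniteDimensional ℝ H] [NormedAddCommGroup S] [InnerProductSpace ℝ S]
    [FiniteDimensional ℝ S]
    (L Lt : H →ₗ[ℝ] H)
    (hLsa : LinearMap.adjoint L = L)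
    (hLpos : ∀ u : H, u ≠ 0 → (0 : ℝ) < inner ℝ (L u) u)
    (hLtsa : LinearMap.adjoint Lt = Lt)
    (hLtpos : ∀ u : H, u ≠ 0 → (0 : ℝ) < inner ℝ (Lt u) u)
    (Linv Ltinv : H →ₗ[ℝ] H)
    (hL1 : L ∘ₗ Linv = LinearMap.id) (hL2 : Linv ∘ₗ L = LinearMap.id)
    (hLt1 : Lt ∘ₗ Ltinv = LinearMap.id) (hLt2 : Ltinv ∘ₗ Lt = LinearMap.id)
    (ℬ : H →ₗ[ℝ] S) (hℬ : Function.Surjective ℬ)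
    (Kinv : S →ₗ[ℝ] S)
    (hK1 : (ℬ ∘ₗ Linv ∘ₗ LinearMap.adjoint ℬ) ∘ₗ Kinv = LinearMap.id)
    (hK2 : Kinv ∘ₗ (ℬ ∘ₗ Linv ∘ₗ LinearMap.adjoint ℬ) = LinearMap.id)
    (a b : ℝ)
    (hab : ∀ lam : ℝ, Module.End.HasEigenvalue (Ltinv ∘ₗ L : Module.End ℝ H) lam →
      a ≤ lam ∧ lam ≤ b) :
    (∀ u : S, u ≠ 0 →
      a * (inner ℝ ((ℬ ∘ₗ Linv ∘ₗ LinearMap.adjoint ℬ) u) u : ℝ) ≤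
          inner ℝ ((ℬ ∘ₗ Ltinv ∘ₗ LinearMap.adjoint ℬ) u) u ∧
      (inner ℝ ((ℬ ∘ₗ Ltinv ∘ₗ LinearMap.adjoint ℬ) u) u : ℝ) ≤
          b * inner ℝ ((ℬ ∘ₗ Linv ∘ₗ LinearMap.adjoint ℬ) u) u) ∧
    (∀ lam : ℝ,
      Module.End.HasEigenvalue
        ((ℬ ∘ₗ Ltinv ∘ₗ LinearMap.adjoint ℬ) ∘ₗ Kinv : Module.End ℝ S) lam →
      a ≤ lam ∧ lam ≤ b) := by
  -- symmetry of L and of Ltinv as bilinear identities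
  have hLsym : ∀ x y : H, (inner ℝ (L x) y : ℝ) = inner ℝ x (L y) := fun x y => by
    conv_lhs => rw [← hLsa]
    rw [LinearMap.adjoint_inner_left]
  have hid : LinearMap.adjoint (LinearMap.id : H →ₗ[ℝ] H) = LinearMap.id := by
    refine LinearMap.ext fun y => ?_
    apply ext_inner_right ℝ
    intro x
    rw [LinearMap.adjoint_inner_left]
    simp
  have hLtinv_sa : LinearMap.adjoint Ltinv = Ltinv := by
    have h1 : LinearMap.adjoint Ltinv ∘ₗ Lt = LinearMap.id := by
      rw [← hLtsa, ← LinearMap.adjoint_comp, hLt1, hid]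
    calc LinearMap.adjoint Ltinv
        = LinearMap.adjoint Ltinv ∘ₗ (Lt ∘ₗ Ltinv) := by rw [hLt1, LinearMap.comp_id]
      _ = (LinearMap.adjoint Ltinv ∘ₗ Lt) ∘ₗ Ltinv := by rw [LinearMap.comp_assoc]
      _ = Ltinv := by rw [h1, LinearMap.id_comp]
  have hLtinvsym : ∀ x y : H, (inner ℝ (Ltinv x) y : ℝ) = inner ℝ x (Ltinv y) := fun x y => by
    conv_lhs => rw [← hLtinv_sa]
    rw [LinearMap.adjoint_inner_left]
  have hLLinv : ∀ v : H, L (Linv v) = v := fun v => by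
    have := DFunLike.congr_fun hL1 v
    simpa using this
  -- the L-inner-product core
  let c : InnerProductSpace.Core ℝ H :=
    { inner := fun x y => inner ℝ (L x) y
      conj_inner_symm := fun x y => by
        simp only [starRingEnd_apply, star_trivial]
        rw [hLsym y x, real_inner_comm]
      re_inner_nonneg := fun x => by
        rcases eq_or_ne x 0 with h | h
        · simp [h]
        · exact le_of_lt (by simpa using hLpos x h)
      add_left := fun x y z => by simp [map_add, inner_add_left]
      smul_left := fun x y r => by
        simp [map_smul, real_inner_smul_left]
      definite := fun x hx => by
        by_contra h
        exact absurd hx (ne_of_gt (hLpos x h)) }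
  -- T := Ltinv ∘ L is symmetric w.r.t. c
  have hTsym : ∀ x y : H, c.inner ((Ltinv ∘ₗ L) x) y = c.inner x ((Ltinv ∘ₗ L) y) := by
    intro x y
    show (inner ℝ (L (Ltinv (L x))) y : ℝ) = inner ℝ (L x) (Ltinv (L y))
    rw [hLsym (Ltinv (L x)) y, hLtinvsym (L x) (L y)]
  have key := aux_rayleigh_core c ‹FiniteDimensional ℝ H› (Ltinv ∘ₗ L) hTsym a b hab
  -- main quadratic form bound on H
  have hmain : ∀ v : H,
      a * (inner ℝ (Linv v) v : ℝ) ≤ inner ℝ (Ltinv v) v ∧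
      (inner ℝ (Ltinv v) v : ℝ) ≤ b * inner ℝ (Linv v) v := by
    intro v
    have h := key (Linv v)
    have h1 : c.inner (Linv v) (Linv v) = (inner ℝ (Linv v) v : ℝ) := by
      show (inner ℝ (L (Linv v)) (Linv v) : ℝ) = inner ℝ (Linv v) v
      rw [hLLinv v, real_inner_comm]
    have h2 : c.inner ((Ltinv ∘ₗ L) (Linv v)) (Linv v) = (inner ℝ (Ltinv v) v : ℝ) := by
      show (inner ℝ (L (Ltinv (L (Linv v)))) (Linv v) : ℝ) = inner ℝ (Ltinv v) v
      rw [hLLinv v, hLsym (Ltinv v) (Linv v), hLLinv v]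
    rw [h1, h2] at h
    exact h
  -- adjoint ℬ is injective
  have hBt : ∀ u : S, u ≠ 0 → LinearMap.adjoint ℬ u ≠ 0 := by
    intro u hu h0
    obtain ⟨x, hx⟩ := hℬ u
    have : (inner ℝ u u : ℝ) = 0 := by
      calc (inner ℝ u u : ℝ) = inner ℝ (ℬ x) u := by rw [hx]
        _ = inner ℝ x (LinearMap.adjoint ℬ u) := (LinearMap.adjoint_inner_right ℬ x u).symm
        _ = 0 := by rw [h0, inner_zero_right]
    exact hu (inner_self_eq_zero.mp this)
  -- rewrite the S-side quadratic forms
  have hformL : ∀ u : S, (inner ℝ ((ℬ ∘ₗ Linv ∘ₗ LinearMap.adjoint ℬ) u) u : ℝ) =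
      inner ℝ (Linv (LinearMap.adjoint ℬ u)) (LinearMap.adjoint ℬ u) := by
    intro u
    show (inner ℝ (ℬ (Linv (LinearMap.adjoint ℬ u))) u : ℝ) = _
    calc (inner ℝ (ℬ (Linv (LinearMap.adjoint ℬ u))) u : ℝ)
        = inner ℝ u (ℬ (Linv (LinearMap.adjoint ℬ u))) := real_inner_comm _ _
      _ = inner ℝ (LinearMap.adjoint ℬ u) (Linv (LinearMap.adjoint ℬ u)) :=
          (LinearMap.adjoint_inner_left ℬ _ u).symm
      _ = inner ℝ (Linv (LinearMap.adjoint ℬ u)) (LinearMap.adjoint ℬ u) := real_inner_comm _ _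
  have hformLt : ∀ u : S, (inner ℝ ((ℬ ∘ₗ Ltinv ∘ₗ LinearMap.adjoint ℬ) u) u : ℝ) =
      inner ℝ (Ltinv (LinearMap.adjoint ℬ u)) (LinearMap.adjoint ℬ u) := by
    intro u
    show (inner ℝ (ℬ (Ltinv (LinearMap.adjoint ℬ u))) u : ℝ) = _
    calc (inner ℝ (ℬ (Ltinv (LinearMap.adjoint ℬ u))) u : ℝ)
        = inner ℝ u (ℬ (Ltinv (LinearMap.adjoint ℬ u))) := real_inner_comm _ _
      _ = inner ℝ (LinearMap.adjoint ℬ u) (Ltinv (LinearMap.adjoint ℬ u)) :=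
          (LinearMap.adjoint_inner_left ℬ _ u).symm
      _ = inner ℝ (Ltinv (LinearMap.adjoint ℬ u)) (LinearMap.adjoint ℬ u) := real_inner_comm _ _
  have part1 : ∀ u : S, u ≠ 0 →
      a * (inner ℝ ((ℬ ∘ₗ Linv ∘ₗ LinearMap.adjoint ℬ) u) u : ℝ) ≤
          inner ℝ ((ℬ ∘ₗ Ltinv ∘ₗ LinearMap.adjoint ℬ) u) u ∧
      (inner ℝ ((ℬ ∘ₗ Ltinv ∘ₗ LinearMap.adjoint ℬ) u) u : ℝ) ≤
          b * inner ℝ ((ℬ ∘ₗ Linv ∘ₗ LinearMap.adjoint ℬ) u) u := by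
    intro u hu
    rw [hformL u, hformLt u]
    exact hmain (LinearMap.adjoint ℬ u)
  refine ⟨part1, ?_⟩
  -- positivity of the L-form on S
  have hposS : ∀ u : S, u ≠ 0 →
      (0 : ℝ) < inner ℝ ((ℬ ∘ₗ Linv ∘ₗ LinearMap.adjoint ℬ) u) u := by
    intro u hu
    rw [hformL u]
    set v := LinearMap.adjoint ℬ u with hv
    have hv0 : v ≠ 0 := hBt u hu
    have hx0 : Linv v ≠ 0 := by
      intro h
      apply hv0
      rw [← hLLinv v, h, map_zero]
    have hpos := hLpos (Linv v) hx0
    rw [real_inner_comm] at hpos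
    rw [hLLinv v] at hpos
    exact hpos
  -- eigenvalue bounds on S
  intro lam he
  obtain ⟨u, hu⟩ := he.exists_hasEigenvector
  have hue : ((ℬ ∘ₗ Ltinv ∘ₗ LinearMap.adjoint ℬ) ∘ₗ Kinv) u = lam • u := hu.apply_eq_smul
  have hu0 : u ≠ 0 := hu.2
  set w := Kinv u with hw
  have hwu : (ℬ ∘ₗ Linv ∘ₗ LinearMap.adjoint ℬ) w = u := by
    have := DFunLike.congr_fun hK1 u
    simpa using this
  have hw0 : w ≠ 0 := by
    intro h
    apply hu0
    rw [← hwu, h, map_zero]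
  have heq : (inner ℝ ((ℬ ∘ₗ Ltinv ∘ₗ LinearMap.adjoint ℬ) w) w : ℝ)
      = lam * inner ℝ ((ℬ ∘ₗ Linv ∘ₗ LinearMap.adjoint ℬ) w) w := by
    have h2 : (ℬ ∘ₗ Ltinv ∘ₗ LinearMap.adjoint ℬ) w = lam • u := by
      rw [← hue]
      rfl
    rw [h2, ← hwu, real_inner_smul_left]
  have hI := hposS w hw0
  have hp := part1 w hw0
  rw [heq] at hp
  exact ⟨(mul_le_mul_iff_of_pos_right hI).mp hp.1, (mul_le_mul_iff_of_pos_right hI).mp hp.2⟩
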